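/- arXiv:2106.09567 — 3 statements merged into one kernel-verified Lean document; each statement's English description precedes it below -/
import Mathlib

section
/- For positive definite density matrices ρ and σ, Tr(ρ² σ⁻¹) ≥ 1, with equality if and only if ρ = σ. -/
open Matrix
open scoped ComplexOrder

lemma psd_trace_nonneg {d : ℕ} {A : Matrix (Fin d) (Fin d) ℂ} (hA : A.PosSemidef) :
    0 ≤ A.trace := by
  rw [Matrix.trace]
  apply Finset.sum_nonneg
  intro i _
  have := hA.dotProduct_mulVec_nonneg (Pi.single i 1)
  simpa [Matrix.diag, dotProduct, Matrix.mulVec, Pi.single_apply,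
    apply_ite (star : ℂ → ℂ), ite_mul, Finset.sum_ite_eq, Finset.sum_ite_eq'] using this

lemma psd_trace_eq_zero {d : ℕ} {A : Matrix (Fin d) (Fin d) ℂ} (hA : A.PosSemidef)
    (h : A.trace = 0) : A = 0 := by
  obtain ⟨B, rfl⟩ : ∃ B : Matrix (Fin d) (Fin d) ℂ, A = Bᴴ * B := by
    open scoped MatrixOrder in exact CStarAlgebra.nonneg_iff_eq_star_mul_self.mp hA.nonneg
  rw [Matrix.conjTranspose_mul_self_eq_zero]
  have hdiag : ∀ j, (Bᴴ * B) j j = 0 := by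
    have hnn : ∀ j ∈ Finset.univ, (0:ℂ) ≤ (Bᴴ * B) j j := fun j _ => by
      have := hA.dotProduct_mulVec_nonneg (Pi.single j 1)
      simpa [dotProduct, Matrix.mulVec, Pi.single_apply,
        apply_ite (star : ℂ → ℂ), ite_mul, Finset.sum_ite_eq, Finset.sum_ite_eq'] using this
    intro j
    exact (Finset.sum_eq_zero_iff_of_nonneg hnn).mp h j (Finset.mem_univ j)
  ext i j
  have hj := hdiag j
  rw [Matrix.mul_apply] at hj
  have : (star fun k => B k j) ⬝ᵥ (fun k => B k j) = 0 := by
    simpa [dotProduct, Matrix.conjTranspose_apply] using hj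
  have := dotProduct_star_self_eq_zero.mp this
  simpa using congr_fun this i

/-- For positive definite density matrices `ρ` and `σ`, `Tr(ρ² σ⁻¹) ≥ 1`,
with equality if and only if `ρ = σ`. -/
theorem trace_sq_mul_inv_ge_one {d : ℕ}
    (ρ σ : Matrix (Fin d) (Fin d) ℂ)
    (hρ : ρ.PosDef) (hσ : σ.PosDef)
    (hρtr : ρ.trace = 1) (hσtr : σ.trace = 1) :
    1 ≤ (ρ ^ 2 * σ⁻¹).trace.re ∧ ((ρ ^ 2 * σ⁻¹).trace.re = 1 ↔ ρ = σ) := by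
  have hdet : IsUnit σ.det := hσ.det_pos.ne'.isUnit
  have hσS : σ * σ⁻¹ = 1 := Matrix.mul_nonsing_inv σ hdet
  have hSσ : σ⁻¹ * σ = 1 := Matrix.nonsing_inv_mul σ hdet
  have hSpd : (σ⁻¹).PosDef := hσ.inv
  set D := ρ - σ with hD
  have hDH : Dᴴ = D := by
    rw [hD, Matrix.conjTranspose_sub, hρ.1.eq, hσ.1.eq]
  have hpsd : (Dᴴ * σ⁻¹ * D).PosSemidef :=
    hSpd.posSemidef.conjTranspose_mul_mul_same D
  have expand : Dᴴ * σ⁻¹ * D = ρ * σ⁻¹ * ρ - ρ - ρ + σ := by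
    rw [hDH, hD]
    simp only [Matrix.sub_mul, Matrix.mul_sub]
    rw [mul_assoc ρ σ⁻¹ σ, hSσ, mul_one, mul_assoc σ σ⁻¹ σ, hSσ, mul_one,
      hσS, Matrix.one_mul]
    abel
  have hcyc : (ρ * σ⁻¹ * ρ).trace = (ρ ^ 2 * σ⁻¹).trace := by
    rw [Matrix.trace_mul_cycle, ← pow_two]
  have key : (Dᴴ * σ⁻¹ * D).trace = (ρ ^ 2 * σ⁻¹).trace - 1 := by
    rw [expand]
    simp only [Matrix.trace_add, Matrix.trace_sub, hρtr, hσtr, hcyc]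
    ring
  have hnn : (0:ℂ) ≤ (Dᴴ * σ⁻¹ * D).trace := psd_trace_nonneg hpsd
  rw [Complex.le_def] at hnn
  have him : (Dᴴ * σ⁻¹ * D).trace.im = 0 := hnn.2.symm
  have hre : 0 ≤ (Dᴴ * σ⁻¹ * D).trace.re := by simpa using hnn.1
  have hre_eq : (ρ ^ 2 * σ⁻¹).trace.re = (Dᴴ * σ⁻¹ * D).trace.re + 1 := by
    have := congrArg Complex.re key
    simp at this
    linarith
  constructor
  · linarith
  constructor
  · intro h1
    have ht0 : (Dᴴ * σ⁻¹ * D).trace = 0 := by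
      apply Complex.ext
      · simp; linarith
      · simpa using him
    have hM0 : Dᴴ * σ⁻¹ * D = 0 := psd_trace_eq_zero hpsd ht0
    have hDzero : D = 0 := by
      by_contra hDne
      -- find x with D *ᵥ x ≠ 0
      have : ∃ x, D *ᵥ x ≠ 0 := by
        by_contra hall
        push_neg at hall
        apply hDne
        ext i j
        have := congr_fun (hall (Pi.single j 1)) i
        simpa [Matrix.mulVec_single] using this
      obtain ⟨x, hx⟩ := this
      have hpos := hSpd.dotProduct_mulVec_pos (x := D *ᵥ x) hx
      have : star (D *ᵥ x) ⬝ᵥ σ⁻¹ *ᵥ (D *ᵥ x) = 0 := by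
        rw [Matrix.star_mulVec, hDH, Matrix.mulVec_mulVec,
          Matrix.dotProduct_mulVec, Matrix.vecMul_vecMul, ← mul_assoc, hDH] at *
        rw [hM0]
        simp
      rw [this] at hpos
      exact lt_irrefl 0 hpos
    exact sub_eq_zero.mp hDzero
  · rintro rfl
    have : ρ ^ 2 * ρ⁻¹ = ρ := by
      rw [pow_two, mul_assoc, hσS]
      · simp
    rw [this, hρtr]
    simp
end

section
/- Duhamel's formula: for a differentiable family of matrices H(θ), ∂_θ e^{-H(θ)} = -∫_0^1 e^{-sH(θ)} (∂_θ H(θ)) e^{-(1-s)H(θ)} ds. -/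
open Matrix intervalIntegral NormedSpace

section aux

attribute [local instance] Matrix.linftyOpNormedRing Matrix.linftyOpNormedAlgebra

variable {d : ℕ}

local notation "M" => Matrix (Fin d) (Fin d) ℂ

private lemma cont_exp_path (B : M) : Continuous fun s : ℝ => exp ((-s : ℝ) • B) :=
  exp_continuous.comp (continuous_neg.smul continuous_const)

private lemma cont_exp_path' (C : M) : Continuous fun s : ℝ => exp ((-(1 - s) : ℝ) • C) :=
  exp_continuous.comp ((continuous_const.sub continuous_id).neg.smul continuous_const)

private lemma path_hasDerivAt (B C : M) (s : ℝ) :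
    HasDerivAt (fun s : ℝ => exp ((-s : ℝ) • B) * exp ((-(1 - s) : ℝ) • C))
      (exp ((-s : ℝ) • B) * (C - B) * exp ((-(1 - s) : ℝ) • C)) s := by
  have h1 : HasDerivAt (fun s : ℝ => exp ((-s : ℝ) • B))
      (-(exp ((-s : ℝ) • B) * B)) s := by
    have := HasDerivAt.scomp (𝕜 := ℝ) s (hasDerivAt_exp_smul_const (𝕂 := ℝ) B (-s))
      (hasDerivAt_neg s)
    simp [Function.comp_def] at this ⊢
    exact this
  have h2 : HasDerivAt (fun s : ℝ => exp ((-(1 - s) : ℝ) • C))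
      (C * exp ((-(1 - s) : ℝ) • C)) s := by
    have hlin : HasDerivAt (fun s : ℝ => -(1 - s)) 1 s := by
      simpa using hasDerivAt_id' s
    have := HasDerivAt.scomp (𝕜 := ℝ) s (hasDerivAt_exp_smul_const' (𝕂 := ℝ) C (-(1 - s)))
      hlin
    simp [Function.comp_def] at this ⊢
    exact this
  have := h1.mul h2
  refine this.congr_deriv ?_
  simp only [mul_sub, sub_mul, mul_assoc, neg_mul]
  abel

private lemma exp_sub_exp (B C : M) :
    exp (-B) - exp (-C)
      = ∫ s in (0:ℝ)..1, exp ((-s : ℝ) • B) * (C - B) * exp ((-(1 - s) : ℝ) • C) := by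
  have hcont : Continuous fun s : ℝ =>
      exp ((-s : ℝ) • B) * (C - B) * exp ((-(1 - s) : ℝ) • C) :=
    ((cont_exp_path B).mul continuous_const).mul (cont_exp_path' C)
  have h := integral_eq_sub_of_hasDerivAt (fun s _ => path_hasDerivAt B C s)
    (hcont.intervalIntegrable 0 1)
  rw [h]
  norm_num

end aux

section aux2

attribute [local instance] Matrix.linftyOpNormedRing Matrix.linftyOpNormedAlgebra

variable {d : ℕ}

local notation "M" => Matrix (Fin d) (Fin d) ℂ

private lemma cont_phi (A : M) :
    Continuous (fun p : M × M =>
      ∫ s in (0:ℝ)..1, exp ((-s : ℝ) • p.1) * p.2 * exp ((-(1 - s) : ℝ) • A)) := by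
  apply continuous_parametric_intervalIntegral_of_continuous'
  show Continuous fun q : (M × M) × ℝ =>
    exp ((-q.2 : ℝ) • q.1.1) * q.1.2 * exp ((-(1 - q.2) : ℝ) • A)
  have h1 : Continuous fun q : (M × M) × ℝ => exp ((-q.2 : ℝ) • q.1.1) :=
    exp_continuous.comp (continuous_snd.neg.smul (continuous_fst.comp continuous_fst))
  exact (h1.mul (continuous_snd.comp continuous_fst)).mul
    ((cont_exp_path' A).comp continuous_snd)

private lemma duhamel_matrix (H : ℝ → M) (H' : M) (θ : ℝ)
    (hslope : Filter.Tendsto (slope H θ) (nhdsWithin θ {θ}ᶜ) (nhds H')) :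
    HasDerivAt (fun t => exp (-(H t)))
      (-(∫ s in (0:ℝ)..1,
          exp ((-s : ℝ) • H θ) * H' * exp ((-(1 - s) : ℝ) • H θ))) θ := by
  refine hasDerivAt_iff_tendsto_slope.mpr ?_
  set A := H θ with hA
  set Φ : M × M → M := fun p =>
    ∫ s in (0:ℝ)..1, exp ((-s : ℝ) • p.1) * p.2 * exp ((-(1 - s) : ℝ) • A) with hΦ
  have hcontH : Filter.Tendsto H (nhdsWithin θ {θ}ᶜ) (nhds A) := by
    have : Filter.Tendsto (fun t => (t - θ) • slope H θ t + A) (nhdsWithin θ {θ}ᶜ) (nhds A) := by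
      have h0 : Filter.Tendsto (fun t : ℝ => t - θ) (nhdsWithin θ {θ}ᶜ) (nhds 0) := by
        have h0' : Filter.Tendsto (fun t : ℝ => t - θ) (nhds θ) (nhds (θ - θ)) :=
          Filter.Tendsto.sub Filter.tendsto_id tendsto_const_nhds
        simpa using h0'.mono_left nhdsWithin_le_nhds
      simpa using (h0.smul hslope).add_const A
    refine this.congr' ?_
    filter_upwards [self_mem_nhdsWithin] with t ht
    have ht' : t - θ ≠ 0 := sub_ne_zero.mpr ht
    simp [slope_def_module, smul_smul, mul_inv_cancel₀ ht', hA]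
  have htend : Filter.Tendsto (fun t => (H t, -slope H θ t)) (nhdsWithin θ {θ}ᶜ)
      (nhds (A, -H')) := hcontH.prodMk_nhds hslope.neg
  have hkey : Filter.Tendsto (fun t => Φ (H t, -slope H θ t)) (nhdsWithin θ {θ}ᶜ)
      (nhds (Φ (A, -H'))) := ((cont_phi A).tendsto _).comp htend
  have heq : ∀ t, t ≠ θ →
      slope (fun t => exp (-(H t))) θ t = Φ (H t, -slope H θ t) := by
    intro t ht
    have ht' : (t - θ) ≠ 0 := sub_ne_zero.mpr ht
    rw [slope_def_module, exp_sub_exp (H t) A, hΦ]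
    rw [← intervalIntegral.integral_smul]
    funext s
    have : (t - θ)⁻¹ • (A - H t) = -slope H θ t := by
      rw [slope_def_module, ← smul_neg, neg_sub]
    rw [← this]
    simp only [smul_mul_assoc, mul_smul_comm]
  have hΦval : Φ (A, -H') =
      -(∫ s in (0:ℝ)..1, exp ((-s : ℝ) • A) * H' * exp ((-(1 - s) : ℝ) • A)) := by
    rw [hΦ, ← intervalIntegral.integral_neg]
    refine intervalIntegral.integral_congr fun s _ => ?_
    simp [mul_neg, neg_mul]
  rw [← hΦval]
  refine hkey.congr' ?_
  filter_upwards [self_mem_nhdsWithin] with t ht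
  exact (heq t ht).symm

end aux2

private lemma tendsto_slope_entrywise {d : ℕ}
    (H : ℝ → Matrix (Fin d) (Fin d) ℂ) (H' : Matrix (Fin d) (Fin d) ℂ) (θ : ℝ)
    (hderiv : ∀ a b, HasDerivAt (fun t => H t a b) (H' a b) θ) :
    Filter.Tendsto (slope H θ) (nhdsWithin θ {θ}ᶜ) (nhds H') := by
  have hH : @HasDerivAt ℝ _ (Fin d → Fin d → ℂ) _ _ _ _ H H' θ :=
    hasDerivAt_pi.mpr fun i => hasDerivAt_pi.mpr fun j => hderiv i j
  exact hasDerivAt_iff_tendsto_slope.mp hH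

/-- **Duhamel's formula.**  For a differentiable family of matrices `H(θ)`,
`∂_θ e^{-H(θ)} = -∫_0^1 e^{-s H(θ)} (∂_θ H(θ)) e^{-(1-s) H(θ)} ds` (entrywise). -/
theorem hasDerivAt_exp_neg {d : ℕ}
    (H : ℝ → Matrix (Fin d) (Fin d) ℂ) (H' : Matrix (Fin d) (Fin d) ℂ) (θ : ℝ)
    (hderiv : ∀ a b, HasDerivAt (fun t => H t a b) (H' a b) θ) :
    ∀ a b, HasDerivAt (fun t => NormedSpace.exp (-(H t)) a b)
      (-(∫ s in (0 : ℝ)..1,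
        (NormedSpace.exp (((-s : ℝ) : ℂ) • H θ) * H' *
          NormedSpace.exp (((-(1 - s) : ℝ) : ℂ) • H θ)) a b)) θ := by
  intro a b
  letI : NormedRing (Matrix (Fin d) (Fin d) ℂ) := Matrix.linftyOpNormedRing
  letI : NormedAlgebra ℂ (Matrix (Fin d) (Fin d) ℂ) := Matrix.linftyOpNormedAlgebra
  letI : NormedAlgebra ℝ (Matrix (Fin d) (Fin d) ℂ) := Matrix.linftyOpNormedAlgebra
  have hslope := tendsto_slope_entrywise H H' θ hderiv
  have hmat := duhamel_matrix H H' θ hslope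
  -- entry evaluation as a continuous linear map
  let L : Matrix (Fin d) (Fin d) ℂ →L[ℂ] ℂ :=
    LinearMap.toContinuousLinearMap
      (Matrix.entryLinearMap ℂ ℂ a b)
  have hLapp : ∀ A : Matrix (Fin d) (Fin d) ℂ, L A = A a b := fun _ => rfl
  -- entrywise derivative of the exponential
  have hmat' := hasDerivAt_iff_tendsto_slope.mp hmat
  have hent : HasDerivAt (fun t => exp (-(H t)) a b)
      ((-(∫ s in (0:ℝ)..1,
          exp ((-s : ℝ) • H θ) * H' * exp ((-(1 - s) : ℝ) • H θ))) a b) θ := by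
    rw [hasDerivAt_iff_tendsto_slope]
    have := ((L.continuous.tendsto _).comp hmat')
    refine this.congr fun t => ?_
    simp only [Function.comp_apply, hLapp, slope_def_module, Matrix.smul_apply,
      Matrix.sub_apply]
  convert hent using 1
  -- identify the stated scalar integral with the entry of the matrix integral
  have hcont : Continuous fun s : ℝ =>
      exp ((-s : ℝ) • H θ) * H' * exp ((-(1 - s) : ℝ) • H θ) :=
    ((cont_exp_path (H θ)).mul continuous_const).mul (cont_exp_path' (H θ))
  have hcomm := L.intervalIntegral_comp_comm (μ := MeasureTheory.volume) (a := 0) (b := 1)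
    (f := fun s => exp ((-s : ℝ) • H θ) * H' * exp ((-(1 - s) : ℝ) • H θ))
    (hcont.intervalIntegrable 0 1)
  simp only [Matrix.neg_apply, Complex.coe_smul]
  congr 1
end

section
/- Let σ(θ) = U(θ)|0⟩⟨0|U(θ)† be a pure-state family with ∂_{θ_k} σ = -i[H̃_k, σ] for a Hermitian unitary contraction H̃_k (‖H̃_k‖ ≤ 1), and let ρ be positive definite. Then the gradient of the reverse maximal Rényi 2-divergence is bounded by |∂_{θ_k} log Tr(σ² ρ⁻¹)| ≤ 4 ‖ρ⁻¹‖ / Tr(σ² ρ⁻¹). -/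
open Matrix
open scoped ComplexOrder Matrix.Norms.L2Operator

namespace RRGB

variable {d : ℕ}

open scoped MatrixOrder

lemma diag_eq (S B : Matrix (Fin d) (Fin d) ℂ) (hS : S.IsHermitian) (i : Fin d) :
    (S * B * S) i i = dotProduct (star (fun j => S j i)) (B *ᵥ (fun j => S j i)) := by
  simp only [mul_apply, dotProduct, mulVec, Pi.star_apply, Finset.sum_mul, Finset.mul_sum]
  rw [Finset.sum_comm]
  refine Finset.sum_congr rfl fun j _ => Finset.sum_congr rfl fun k _ => ?_
  rw [← hS.apply i j]
  ring

lemma quad_bound (B : Matrix (Fin d) (Fin d) ℂ) (x : EuclideanSpace ℂ (Fin d)) :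
    ‖dotProduct (star (x : Fin d → ℂ)) (B *ᵥ x)‖ ≤ ‖B‖ * ‖x‖ ^ 2 := by
  have h : dotProduct (star (x : Fin d → ℂ)) (B *ᵥ x)
      = @inner ℂ _ _ x ((EuclideanSpace.equiv (Fin d) ℂ).symm (B *ᵥ x)) := by
    simp [PiLp.inner_apply, dotProduct, RCLike.inner_apply, mul_comm]
  rw [h]
  calc ‖@inner ℂ _ _ x ((EuclideanSpace.equiv (Fin d) ℂ).symm (B *ᵥ x))‖
      ≤ ‖x‖ * ‖(EuclideanSpace.equiv (Fin d) ℂ).symm (B *ᵥ x)‖ := norm_inner_le_norm _ _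
    _ ≤ ‖x‖ * (‖B‖ * ‖x‖) := by
        exact mul_le_mul_of_nonneg_left (B.l2_opNorm_mulVec x) (norm_nonneg _)
    _ = ‖B‖ * ‖x‖ ^ 2 := by ring

lemma col_norm_sq (S P : Matrix (Fin d) (Fin d) ℂ) (hS : S.IsHermitian) (hSP : S * S = P)
    (i : Fin d) :
    ‖(EuclideanSpace.equiv (Fin d) ℂ).symm (fun j => S j i)‖ ^ 2 = (P i i).re := by
  have h : @inner ℂ _ _ ((EuclideanSpace.equiv (Fin d) ℂ).symm (fun j => S j i))
      ((EuclideanSpace.equiv (Fin d) ℂ).symm (fun j => S j i)) = P i i := by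
    rw [← hSP]
    simp only [PiLp.inner_apply, RCLike.inner_apply, mul_apply]
    refine Finset.sum_congr rfl fun j _ => ?_
    rw [← hS.apply i j]
    exact mul_comm _ _
  rw [← inner_self_eq_norm_sq (𝕜 := ℂ), h]
  simp [RCLike.re_to_complex]

lemma trace_bound (B P : Matrix (Fin d) (Fin d) ℂ) (hP : P.PosSemidef) :
    ‖(B * P).trace‖ ≤ ‖B‖ * P.trace.re := by
  set S := CFC.sqrt P with hSdef
  have hS : S.IsHermitian := (CFC.sqrt_nonneg P).posSemidef.1
  have hSP : S * S = P := CFC.sqrt_mul_sqrt_self P hP.nonneg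
  have htr : (B * P).trace = (S * B * S).trace := by
    rw [← hSP, ← mul_assoc, trace_mul_comm, ← mul_assoc]
  rw [htr, trace]
  calc ‖∑ i, (S * B * S).diag i‖
      ≤ ∑ i, ‖(S * B * S) i i‖ := norm_sum_le _ _
    _ ≤ ∑ i, ‖B‖ * (P i i).re := by
        refine Finset.sum_le_sum fun i _ => ?_
        rw [diag_eq S B hS i]
        calc ‖dotProduct (star (fun j => S j i)) (B *ᵥ (fun j => S j i))‖
            ≤ ‖B‖ * ‖(EuclideanSpace.equiv (Fin d) ℂ).symm (fun j => S j i)‖ ^ 2 :=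
              quad_bound B ((EuclideanSpace.equiv (Fin d) ℂ).symm (fun j => S j i))
          _ = ‖B‖ * (P i i).re := by rw [col_norm_sq S P hS hSP i]
    _ = ‖B‖ * P.trace.re := by
        rw [← Finset.mul_sum, trace, Complex.re_sum]
        rfl

lemma trace_pos (P Q : Matrix (Fin d) (Fin d) ℂ) (hP : P.PosSemidef)
    (hPtr : P.trace = 1) (hQ : Q.PosDef) : 0 < (P * Q).trace := by
  set S := CFC.sqrt P with hSdef
  have hS : S.IsHermitian := (CFC.sqrt_nonneg P).posSemidef.1
  have hSP : S * S = P := CFC.sqrt_mul_sqrt_self P hP.nonneg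
  have htr : (P * Q).trace = (S * Q * S).trace := by
    rw [← hSP, mul_assoc, trace_mul_comm]
  rw [htr, trace]
  have hSne : S ≠ 0 := by
    intro h
    rw [h, mul_zero] at hSP
    rw [← hSP] at hPtr
    simp at hPtr
  have hex : ∃ i, (fun j => S j i) ≠ (0 : Fin d → ℂ) := by
    by_contra h
    push_neg at h
    apply hSne
    ext j i
    exact congrFun (h i) j
  obtain ⟨i₀, hi₀⟩ := hex
  refine Finset.sum_pos' (fun i _ => ?_) ⟨i₀, Finset.mem_univ _, ?_⟩
  · show (0 : ℂ) ≤ (S * Q * S) i i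
    rw [diag_eq S Q hS i]
    exact hQ.posSemidef.dotProduct_mulVec_nonneg _
  · show (0 : ℂ) < (S * Q * S) i₀ i₀
    rw [diag_eq S Q hS i₀]
    exact hQ.dotProduct_mulVec_pos hi₀

end RRGB

/-- Bound on the gradient of the reverse maximal Rényi 2-divergence for a pure state `σ`
(with `∂_{θ_k} σ = -i[H̃ₖ, σ]` for a Hermitian contraction `H̃ₖ`) and positive definite
`ρ`: `|∂_{θ_k} log Tr(σ² ρ⁻¹)| = |(-i) Tr({[H̃ₖ,σ],σ} ρ⁻¹) / Tr(σ² ρ⁻¹)| ≤ 4‖ρ⁻¹‖ / Tr(σ² ρ⁻¹)`. -/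
theorem reverse_renyi_gradient_bound {d : ℕ}
    (σ ρ Htil : Matrix (Fin d) (Fin d) ℂ)
    (hσ : σ.PosSemidef) (hσtr : σ.trace = 1) (hpure : σ ^ 2 = σ)
    (hρ : ρ.PosDef)
    (hHerm : Htil.IsHermitian) (hHnorm : ‖Htil‖ ≤ 1) :
    norm
      ((-Complex.I *
          (((Htil * σ - σ * Htil) * σ + σ * (Htil * σ - σ * Htil)) * ρ⁻¹).trace) /
        ((σ ^ 2 * ρ⁻¹).trace))
      ≤ 4 * ‖ρ⁻¹‖ / ((σ ^ 2 * ρ⁻¹).trace.re) := by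
  set C := Htil * σ - σ * Htil with hC
  have hρinv : (ρ⁻¹).PosDef := hρ.inv
  have hden : 0 < (σ ^ 2 * ρ⁻¹).trace := by
    rw [hpure]; exact RRGB.trace_pos σ ρ⁻¹ hσ hσtr hρinv
  have hdenre : 0 < ((σ ^ 2 * ρ⁻¹).trace).re := (Complex.lt_def.mp hden).1
  have him : ((σ ^ 2 * ρ⁻¹).trace).im = 0 := (Complex.lt_def.mp hden).2.symm
  have hσnorm : ‖σ‖ ≤ 1 := by
    have h1 : ‖σ‖ * ‖σ‖ = ‖σ‖ := by
      rw [← σ.l2_opNorm_conjTranspose_mul_self, hσ.1, ← pow_two, hpure]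
    nlinarith [norm_nonneg σ]
  have hCnorm : ‖C‖ ≤ 2 := by
    calc ‖Htil * σ - σ * Htil‖ ≤ ‖Htil * σ‖ + ‖σ * Htil‖ := norm_sub_le _ _
      _ ≤ ‖Htil‖ * ‖σ‖ + ‖σ‖ * ‖Htil‖ :=
          add_le_add (l2_opNorm_mul _ _) (l2_opNorm_mul _ _)
      _ ≤ 2 := by nlinarith [norm_nonneg Htil, norm_nonneg σ]
  have hnum : ‖((C * σ + σ * C) * ρ⁻¹).trace‖ ≤ 4 * ‖ρ⁻¹‖ := by
    have e : ((C * σ + σ * C) * ρ⁻¹).trace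
        = ((ρ⁻¹ * C) * σ).trace + ((C * ρ⁻¹) * σ).trace := by
      rw [add_mul, trace_add]
      congr 1
      · rw [trace_mul_comm, ← mul_assoc]
      · rw [mul_assoc, trace_mul_comm]
    have hstr : σ.trace.re = 1 := by rw [hσtr]; simp
    calc ‖((C * σ + σ * C) * ρ⁻¹).trace‖
        ≤ ‖((ρ⁻¹ * C) * σ).trace‖ + ‖((C * ρ⁻¹) * σ).trace‖ := by
          rw [e]; exact norm_add_le _ _
      _ ≤ ‖ρ⁻¹ * C‖ * σ.trace.re + ‖C * ρ⁻¹‖ * σ.trace.re :=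
          add_le_add (RRGB.trace_bound _ _ hσ) (RRGB.trace_bound _ _ hσ)
      _ ≤ 4 * ‖ρ⁻¹‖ := by
          have h1 : ‖ρ⁻¹ * C‖ ≤ ‖ρ⁻¹‖ * ‖C‖ := l2_opNorm_mul _ _
          have h2 : ‖C * ρ⁻¹‖ ≤ ‖C‖ * ‖ρ⁻¹‖ := l2_opNorm_mul _ _
          rw [hstr]
          nlinarith [norm_nonneg (ρ⁻¹ : Matrix (Fin d) (Fin d) ℂ), norm_nonneg C]
  have habsden : ‖(σ ^ 2 * ρ⁻¹).trace‖ = ((σ ^ 2 * ρ⁻¹).trace).re := by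
    have hz : (σ ^ 2 * ρ⁻¹).trace = ((((σ ^ 2 * ρ⁻¹).trace).re : ℝ) : ℂ) :=
      Complex.ext rfl (by simp [him])
    rw [hz, Complex.norm_real, Real.norm_eq_abs]
    simp only [Complex.ofReal_re]
    exact abs_of_pos hdenre
  rw [norm_div, norm_mul, habsden]
  have hIabs : ‖-Complex.I‖ = 1 := by simp
  rw [hIabs, one_mul]
  exact (div_le_div_iff_of_pos_right hdenre).mpr hnum
end
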